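/- Let I be a set and let V be a linear subspace of l_∞(I) of codimension one. If V is injective as a metric space with the induced metric, then there exists i ∈ I such that V ∩ ( Int(C_i) ∪ Int(−C_i) ) = ∅, where Int(C_i) = { x ∈ l_∞(I) : x_i > sup_{j∈I∖{i}} |x_j| } and Int(−C_i) = { x ∈ l_∞(I) : −x_i > sup_{j∈I∖{i}} |x_j| }. -/

import Mathlib

universe u v w

set_option maxHeartbeats 1000000
set_option synthInstance.maxHeartbeats 1000000

/-- A metric space `X` is injective if for every pair of metric spaces `A`, `B`, every
isometric embedding `ι : A → B` and every `1`-Lipschitz map `f : A → X`, there is a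
`1`-Lipschitz map `g : B → X` with `g ∘ ι = f`. -/
def IsInjectiveMetricSpace (X : Type u) [MetricSpace X] : Prop :=
  ∀ ⦃A : Type v⦄ ⦃B : Type w⦄ [MetricSpace A] [MetricSpace B],
    ∀ ι : A → B, Isometry ι → ∀ f : A → X, LipschitzWith 1 f →
      ∃ g : B → X, LipschitzWith 1 g ∧ ∀ a, g (ι a) = f a

open scoped ENNReal

section Aux

variable {I : Type u}

private lemma linf_abs_apply_le_norm (f : lp (fun _ : I => ℝ) ⊤) (i : I) : |f i| ≤ ‖f‖ := by
  have := lp.norm_apply_le_norm ENNReal.top_ne_zero f i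
  simpa [Real.norm_eq_abs] using this

private lemma linf_norm_le_of_forall {f : lp (fun _ : I => ℝ) ⊤} {C : ℝ} (hC : 0 ≤ C)
    (h : ∀ i, |f i| ≤ C) : ‖f‖ ≤ C :=
  lp.norm_le_of_forall_le hC (by simpa [Real.norm_eq_abs] using h)

private lemma linf_memℓp_of_bounded {f : I → ℝ} {C : ℝ} (h : ∀ i, |f i| ≤ C) :
    Memℓp f (⊤ : ℝ≥0∞) :=
  memℓp_infty ⟨C, by rintro _ ⟨i, rfl⟩; simpa [Real.norm_eq_abs] using h i⟩

open Classical in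
/-- The `±1` sign vector of a set `A`. -/
private noncomputable def sgnVec (A : Set I) : lp (fun _ : I => ℝ) ⊤ :=
  ⟨fun i => if i ∈ A then 1 else -1,
    linf_memℓp_of_bounded (C := 1) (fun i => by by_cases h : i ∈ A <;> simp [h])⟩

open Classical in
private lemma sgnVec_apply (A : Set I) (i : I) :
    (sgnVec A : lp (fun _ : I => ℝ) ⊤) i = if i ∈ A then 1 else -1 := rfl

private lemma sgnVec_pm (A : Set I) (i : I) :
    (sgnVec A : lp (fun _ : I => ℝ) ⊤) i = 1 ∨ (sgnVec A : lp (fun _ : I => ℝ) ⊤) i = -1 := by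
  classical
  rw [sgnVec_apply]
  by_cases h : i ∈ A <;> simp [h]

open Classical in
/-- The indicator vector of a set `A`. -/
private noncomputable def indVec (A : Set I) : lp (fun _ : I => ℝ) ⊤ :=
  ⟨fun i => if i ∈ A then 1 else 0,
    linf_memℓp_of_bounded (C := 1) (fun i => by by_cases h : i ∈ A <;> simp [h])⟩

open Classical in
private lemma indVec_apply (A : Set I) (i : I) :
    (indVec A : lp (fun _ : I => ℝ) ⊤) i = if i ∈ A then 1 else 0 := rfl

private lemma indVec_eq (A : Set I) :
    indVec A = (2⁻¹ : ℝ) • (sgnVec A + sgnVec (Set.univ : Set I)) := by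
  classical
  apply lp.ext
  funext i
  rw [lp.coeFn_smul, Pi.smul_apply, lp.coeFn_add, Pi.add_apply, indVec_apply, sgnVec_apply,
    sgnVec_apply, smul_eq_mul]
  by_cases h : i ∈ A <;> simp [h] <;> norm_num

end Aux

/-- If a codimension-one linear subspace `V` of `l_∞(I)` is injective with the induced
metric, then there is a coordinate `i ∈ I` such that `V` avoids the interiors of the
cones `C_i` and `-C_i`, where
`Int(C_i) = {x : x_i > sup_{j ≠ i} |x_j|}` and `Int(-C_i) = {x : -x_i > sup_{j ≠ i} |x_j|}`. -/
theorem exists_coord_of_injective_codim_one {I : Type u}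
    (V : Submodule ℝ (lp (fun _ : I => ℝ) ⊤))
    (hcodim : Module.finrank ℝ ((lp (fun _ : I => ℝ) ⊤) ⧸ V) = 1)
    (hinj : IsInjectiveMetricSpace.{u, u, u} V) :
    ∃ i : I, (V : Set (lp (fun _ : I => ℝ) ⊤)) ∩
      ({x | (⨆ j : {j : I // j ≠ i}, |x j.1|) < x i} ∪
        {x | (⨆ j : {j : I // j ≠ i}, |x j.1|) < -x i}) = ∅ := by
  classical
  by_contra hcon
  push_neg at hcon
  -- get a 1-Lipschitz retraction `r : l_∞(I) → V`
  obtain ⟨r, hr, hret⟩ := hinj (Subtype.val : V → lp (fun _ : I => ℝ) ⊤)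
    isometry_subtype_coe id LipschitzWith.id
  have hdistV : ∀ a b : V, dist a b =
      ‖(a : lp (fun _ : I => ℝ) ⊤) - (b : lp (fun _ : I => ℝ) ⊤)‖ := by
    intro a b
    rw [dist_eq_norm, ← Submodule.coe_sub]
    rfl
  have hrdist : ∀ (z : lp (fun _ : I => ℝ) ⊤) (b : V),
      ‖((r z : V) : lp (fun _ : I => ℝ) ⊤) - (b : lp (fun _ : I => ℝ) ⊤)‖ ≤ ‖z - b‖ := by
    intro z b
    have h1 := hr.dist_le_mul z ((b : lp (fun _ : I => ℝ) ⊤))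
    rw [hret b] at h1
    simp only [id_eq] at h1
    rw [hdistV] at h1
    simpa [dist_eq_norm] using h1
  -- key coordinate estimate for the retraction applied to sign vectors
  have key : ∀ e : lp (fun _ : I => ℝ) ⊤, (∀ j, e j = 1 ∨ e j = -1) →
      ∀ i : I, 1 ≤ e i * ((r e : lp (fun _ : I => ℝ) ⊤) i) := by
    intro e he i
    have habs_e : ∀ j, |e j| = 1 := fun j => by rcases he j with h | h <;> rw [h] <;> norm_num
    obtain ⟨x, hxV, hxc⟩ := hcon i
    set S : ℝ := ⨆ j : {j : I // j ≠ i}, |x j.1| with hS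
    have hbdd : BddAbove (Set.range fun j : {j : I // j ≠ i} => |x j.1|) :=
      ⟨‖x‖, by rintro _ ⟨j, rfl⟩; exact linf_abs_apply_le_norm x j.1⟩
    have hS0 : 0 ≤ S := by
      rcases isEmpty_or_nonempty {j : I // j ≠ i} with h | h
      · rw [hS, Real.iSup_of_isEmpty]
      · exact (abs_nonneg _).trans (le_ciSup hbdd (Classical.arbitrary _))
    have hSx : S < |x i| := by
      rcases hxc with h | h
      · simp only [Set.mem_setOf_eq] at h
        rw [abs_of_pos (hS0.trans_lt h)]; exact h
      · simp only [Set.mem_setOf_eq] at h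
        rw [abs_of_neg (by linarith : x i < 0)]; exact h
    have hxi : (0:ℝ) < |x i| := hS0.trans_lt hSx
    have hxi0 : x i ≠ 0 := by simpa [abs_pos] using hxi
    set c : ℝ := e i / x i with hc
    set v : lp (fun _ : I => ℝ) ⊤ := c • x with hv
    have hvmem : v ∈ V := V.smul_mem c hxV
    have hvapp : ∀ j, v j = c * x j := by
      intro j; rw [hv, lp.coeFn_smul]; rfl
    have hvi : v i = e i := by
      rw [hvapp, hc]; field_simp
    have hvj : ∀ j, j ≠ i → |v j| ≤ S / |x i| := by
      intro j hj
      rw [hvapp j, abs_mul, hc, abs_div, habs_e, one_div, mul_comm, ← div_eq_mul_inv]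
      have hj' : |x j| ≤ S := le_ciSup hbdd ⟨j, hj⟩
      exact div_le_div_of_nonneg_right hj' hxi.le
    set d : ℝ := 1 - S / |x i| with hd
    have hd1 : S / |x i| < 1 := (div_lt_one hxi).2 hSx
    have hd0 : 0 < d := by rw [hd]; linarith
    set t : ℝ := 2 / d + 1 with ht
    have ht1 : 1 < t := by
      have : 0 < 2 / d := div_pos two_pos hd0
      rw [ht]; linarith
    have htd : 2 ≤ t * d := by
      rw [ht, add_mul, div_mul_cancel₀ _ hd0.ne', one_mul]
      linarith
    clear_value d t
    have hznorm : ‖e - t • v‖ ≤ t - 1 := by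
      refine linf_norm_le_of_forall (by linarith) ?_
      intro j
      have happ : (e - t • v) j = e j - t * v j := by
        rw [lp.coeFn_sub, Pi.sub_apply, lp.coeFn_smul, Pi.smul_apply, smul_eq_mul]
      by_cases hji : j = i
      · subst hji
        rw [happ, hvi]
        have h2 : e j - t * e j = (1 - t) * e j := by ring
        rw [h2, abs_mul, habs_e, mul_one, abs_of_nonpos (by linarith)]
        linarith
      · have h1 : |v j| ≤ S / |x i| := hvj j hji
        have h2 : |e j| = 1 := habs_e j
        have h3 : |e j - t * v j| ≤ |e j| + |t * v j| := abs_sub _ _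
        rw [h2, abs_mul, abs_of_pos (by linarith : (0:ℝ) < t)] at h3
        rw [happ]
        have h4 : t * |v j| ≤ t * (S / |x i|) :=
          mul_le_mul_of_nonneg_left h1 (by linarith)
        have h5 : t * (S / |x i|) = t - t * d := by rw [hd]; ring
        nlinarith
    have hcoord : |((r e : V) : lp (fun _ : I => ℝ) ⊤) i - t * v i| ≤ t - 1 := by
      have h1 := hrdist e (t • (⟨v, hvmem⟩ : V))
      have hcoes : ((t • (⟨v, hvmem⟩ : V) : V) : lp (fun _ : I => ℝ) ⊤) = t • v := rfl
      rw [hcoes] at h1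
      have h2 := h1.trans hznorm
      have h3 := linf_abs_apply_le_norm
        (((r e : V) : lp (fun _ : I => ℝ) ⊤) - t • v) i
      have h4 : (((r e : V) : lp (fun _ : I => ℝ) ⊤) - t • v) i
          = ((r e : V) : lp (fun _ : I => ℝ) ⊤) i - t * v i := by
        rw [lp.coeFn_sub, Pi.sub_apply, lp.coeFn_smul, Pi.smul_apply, smul_eq_mul]
      rw [h4] at h3
      exact h3.trans (le_trans h2 (le_refl _))
    rw [hvi] at hcoord
    have h6 : |e i * ((r e : V) : lp (fun _ : I => ℝ) ⊤) i - t| ≤ t - 1 := by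
      have h7 : e i * ((r e : V) : lp (fun _ : I => ℝ) ⊤) i - t
          = e i * (((r e : V) : lp (fun _ : I => ℝ) ⊤) i - t * e i) := by
        rcases he i with h | h <;> rw [h] <;> ring
      rw [h7, abs_mul, habs_e, one_mul]
      exact hcoord
    have := abs_le.1 h6
    linarith [this.1]
  -- every sign vector lies in V
  have hsignmem : ∀ e : lp (fun _ : I => ℝ) ⊤, (∀ j, e j = 1 ∨ e j = -1) → e ∈ V := by
    intro e he
    have hne : ∀ j, (-e) j = 1 ∨ (-e) j = -1 := by
      intro j
      rw [lp.coeFn_neg, Pi.neg_apply]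
      rcases he j with h | h
      · right; rw [h]
      · left; rw [h]; ring
    have h1 := key e he
    have h2 := key (-e) hne
    set w : V := r e with hw
    set w' : V := r (-e) with hw'
    have hd2 : ‖(w : lp (fun _ : I => ℝ) ⊤) - (w' : lp (fun _ : I => ℝ) ⊤)‖ ≤ 2 := by
      have h3 := hr.dist_le_mul e (-e)
      rw [hdistV] at h3
      have h4 : dist e (-e) = ‖e + e‖ := by rw [dist_eq_norm, sub_neg_eq_add]
      rw [h4] at h3
      have h5 : ‖e + e‖ ≤ 2 := by
        refine linf_norm_le_of_forall (by norm_num) ?_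
        intro j
        rw [lp.coeFn_add, Pi.add_apply]
        rcases he j with h | h <;> rw [h] <;> norm_num
      calc ‖(w : lp (fun _ : I => ℝ) ⊤) - (w' : lp (fun _ : I => ℝ) ⊤)‖
          ≤ 1 * ‖e + e‖ := h3
        _ ≤ 2 := by rw [one_mul]; exact h5
    have hco : ∀ j, (w : lp (fun _ : I => ℝ) ⊤) j - (w' : lp (fun _ : I => ℝ) ⊤) j
        = 2 * e j := by
      intro j
      have ha := (linf_abs_apply_le_norm
        ((w : lp (fun _ : I => ℝ) ⊤) - (w' : lp (fun _ : I => ℝ) ⊤)) j).trans hd2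
      rw [lp.coeFn_sub, Pi.sub_apply] at ha
      have hb := h1 j
      have hc' := h2 j
      rw [lp.coeFn_neg, Pi.neg_apply] at hc'
      have ha' := abs_le.1 ha
      rcases he j with h | h <;> rw [h] at hb hc' ⊢ <;>
        [skip; skip] <;> push_cast at * <;> nlinarith [ha'.1, ha'.2]
    have heq : e = (2⁻¹ : ℝ) • ((w : lp (fun _ : I => ℝ) ⊤) - (w' : lp (fun _ : I => ℝ) ⊤)) := by
      apply lp.ext
      funext j
      rw [lp.coeFn_smul, Pi.smul_apply, lp.coeFn_sub, Pi.sub_apply, smul_eq_mul, hco j]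
      ring
    rw [heq]
    exact V.smul_mem _ (V.sub_mem w.2 w'.2)
  -- indicator vectors lie in V
  have hind : ∀ A : Set I, indVec A ∈ V := by
    intro A
    rw [indVec_eq]
    exact V.smul_mem _ (V.add_mem (hsignmem _ (sgnVec_pm A)) (hsignmem _ (sgnVec_pm _)))
  -- every element of l_∞ lies in V
  have hAll : ∀ x : lp (fun _ : I => ℝ) ⊤, x ∈ V := by
    intro x
    have happrox : ∀ ε : ℝ, 0 < ε → ∃ y, y ∈ V ∧ ‖x - y‖ ≤ ε := by
      intro ε hε
      set K : Finset ℤ := Finset.Icc ⌊-‖x‖ / ε⌋ ⌊‖x‖ / ε⌋ with hK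
      set y : lp (fun _ : I => ℝ) ⊤ :=
        ∑ k ∈ K, ((ε * k) • indVec {i : I | ⌊x i / ε⌋ = k}) with hy
      refine ⟨y, Submodule.sum_mem V (fun k _ => V.smul_mem _ (hind _)), ?_⟩
      refine linf_norm_le_of_forall hε.le ?_
      intro i
      have hmem : ⌊x i / ε⌋ ∈ K := by
        rw [hK, Finset.mem_Icc]
        constructor
        · exact Int.floor_le_floor (by
            apply div_le_div_of_nonneg_right _ hε.le
            linarith [neg_abs_le (x i), linf_abs_apply_le_norm x i])
        · exact Int.floor_le_floor (by
            apply div_le_div_of_nonneg_right _ hε.le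
            linarith [le_abs_self (x i), linf_abs_apply_le_norm x i])
      have hyi : y i = ε * ⌊x i / ε⌋ := by
        rw [hy, lp.coeFn_sum, Finset.sum_apply]
        have hterm : ∀ k : ℤ, ((ε * (k:ℝ)) • indVec {i : I | ⌊x i / ε⌋ = k}
            : lp (fun _ : I => ℝ) ⊤) i
            = if ⌊x i / ε⌋ = k then ε * (k:ℝ) else 0 := by
          intro k
          rw [lp.coeFn_smul, Pi.smul_apply, smul_eq_mul, indVec_apply]
          by_cases h : ⌊x i / ε⌋ = k
          · simp [h, Set.mem_setOf_eq]
          · simp [h, Set.mem_setOf_eq]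
        rw [Finset.sum_congr rfl (fun k _ => hterm k)]
        rw [Finset.sum_ite_eq K ⌊x i / ε⌋ (fun k => ε * (k:ℝ)), if_pos hmem]
      have hdiff : (x - y) i = x i - ε * ⌊x i / ε⌋ := by
        rw [lp.coeFn_sub, Pi.sub_apply, hyi]
      rw [hdiff]
      have h1 : x i - ε * ⌊x i / ε⌋ = ε * Int.fract (x i / ε) := by
        rw [Int.fract]
        field_simp
      rw [h1, abs_mul, abs_of_pos hε, abs_of_nonneg (Int.fract_nonneg _)]
      nlinarith [Int.fract_lt_one (x i / ε), Int.fract_nonneg (x i / ε)]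
    have hx : ((r x : V) : lp (fun _ : I => ℝ) ⊤) = x := by
      have hub : ∀ ε : ℝ, 0 < ε → ‖((r x : V) : lp (fun _ : I => ℝ) ⊤) - x‖ ≤ 2 * ε := by
        intro ε hε
        obtain ⟨y, hyV, hyx⟩ := happrox ε hε
        have h1 := hrdist x ⟨y, hyV⟩
        calc ‖((r x : V) : lp (fun _ : I => ℝ) ⊤) - x‖
            ≤ ‖((r x : V) : lp (fun _ : I => ℝ) ⊤) - y‖ + ‖y - x‖ := by
              have := norm_sub_le_norm_sub_add_norm_sub
                (((r x : V) : lp (fun _ : I => ℝ) ⊤)) y x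
              exact this
          _ ≤ ‖x - y‖ + ‖y - x‖ := add_le_add_left h1 _
          _ = ‖x - y‖ + ‖x - y‖ := by rw [norm_sub_rev y x]
          _ ≤ 2 * ε := by linarith
      have h0 : ‖((r x : V) : lp (fun _ : I => ℝ) ⊤) - x‖ ≤ 0 := by
        by_contra hpos
        push_neg at hpos
        have := hub (‖((r x : V) : lp (fun _ : I => ℝ) ⊤) - x‖ / 4) (by linarith)
        linarith
      have := le_antisymm h0 (norm_nonneg _)
      rwa [norm_eq_zero, sub_eq_zero] at this
    rw [← hx]
    exact (r x).2
  have hVtop : V = ⊤ := Submodule.eq_top_iff'.2 hAll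
  haveI : Subsingleton ((lp (fun _ : I => ℝ) ⊤) ⧸ V) :=
    Submodule.Quotient.subsingleton_iff.2 hVtop
  rw [Module.finrank_zero_of_subsingleton] at hcodim
  exact one_ne_zero hcodim.symm
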